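/- Let A and B be ℤ-graded associative algebras with degree-one derivations d_A and d_B such that d_A^N = 0 and d_B^P = 0 (so A is an N-dga and B is a P-dga). On the graded tensor product A ⊗ B, with multiplication (a⊗b)(a′⊗b′) = (−1)^{|b||a′|} aa′ ⊗ bb′, define D(a⊗b) = d_A(a)⊗b + (−1)^{|a|} a⊗d_B(b). Then D is a degree-one derivation of A ⊗ B and D^{N+P−1} = 0; that is, A ⊗ B is an (N+P−1)-differential graded algebra. -/

import Mathlib

open TensorProduct

private lemma pow_anticomm {R : Type*} [Ring R] {X Y : R} (h : Y * X = -(X * Y)) :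
    ∀ j : ℕ, Y ^ j * X = (-1 : R) ^ j * (X * Y ^ j)
  | 0 => by simp
  | (j+1) => by
    have ih := pow_anticomm h j
    calc Y ^ (j+1) * X = Y ^ j * (Y * X) := by rw [pow_succ, mul_assoc]
    _ = -(Y ^ j * X * Y) := by rw [h, mul_neg, mul_assoc]
    _ = -((-1:R) ^ j * (X * Y ^ j) * Y) := by rw [ih]
    _ = (-1:R) ^ (j+1) * (X * Y ^ (j+1)) := by
        rw [pow_succ, pow_succ, mul_neg_one, neg_mul, mul_assoc, mul_assoc]

private lemma anticomm_pow_mem {R : Type*} [Ring R] {X Y : R} (h : Y * X = -(X * Y)) :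
    ∀ n : ℕ, (X + Y) ^ n ∈
      AddSubgroup.closure {z : R | ∃ k j : ℕ, k + j = n ∧ z = X ^ k * Y ^ j}
  | 0 => by
    refine AddSubgroup.subset_closure ⟨0, 0, rfl, by simp⟩
  | (n+1) => by
    have ih := anticomm_pow_mem h n
    rw [pow_succ]
    refine AddSubgroup.closure_induction
      (p := fun z _ => z * (X + Y) ∈
        AddSubgroup.closure {z : R | ∃ k j : ℕ, k + j = n + 1 ∧ z = X ^ k * Y ^ j}) ?_ ?_ ?_ ?_ ih
    · rintro z ⟨k, j, hkj, rfl⟩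
      show (X ^ k * Y ^ j) * (X + Y) ∈ _
      rw [mul_add, mul_assoc, pow_anticomm h j, mul_assoc (X ^ k) (Y ^ j) Y, ← pow_succ Y]
      have h1 : X ^ (k+1) * Y ^ j ∈
          AddSubgroup.closure {z : R | ∃ k' j' : ℕ, k' + j' = n + 1 ∧ z = X ^ k' * Y ^ j'} :=
        AddSubgroup.subset_closure ⟨k+1, j, by omega, rfl⟩
      have h2 : X ^ k * Y ^ (j+1) ∈
          AddSubgroup.closure {z : R | ∃ k' j' : ℕ, k' + j' = n + 1 ∧ z = X ^ k' * Y ^ j'} :=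
        AddSubgroup.subset_closure ⟨k, j+1, by omega, rfl⟩
      rcases Nat.even_or_odd j with hj | hj
      · rw [hj.neg_one_pow, one_mul, ← mul_assoc, ← pow_succ]
        exact AddSubgroup.add_mem _ h1 h2
      · rw [hj.neg_one_pow, neg_one_mul, mul_neg, ← mul_assoc, ← pow_succ]
        exact AddSubgroup.add_mem _ (AddSubgroup.neg_mem _ h1) h2
    · show (0:R) * (X + Y) ∈ _
      rw [zero_mul]; exact AddSubgroup.zero_mem _
    · intro a b _ _ ha hb
      show (a + b) * (X + Y) ∈ _
      rw [add_mul]; exact AddSubgroup.add_mem _ ha hb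
    · intro a _ ha
      show (-a) * (X + Y) ∈ _
      rw [neg_mul]; exact AddSubgroup.neg_mem _ ha

private lemma anticomm_nilpotent {R : Type*} [Ring R] {X Y : R} (h : Y * X = -(X * Y))
    {N P : ℕ} (hN : 1 ≤ N) (hP : 1 ≤ P) (hX : X ^ N = 0) (hY : Y ^ P = 0) :
    (X + Y) ^ (N + P - 1) = 0 := by
  have hmem := anticomm_pow_mem h (N + P - 1)
  have hsub : {z : R | ∃ k j : ℕ, k + j = N + P - 1 ∧ z = X ^ k * Y ^ j} ⊆ (⊥ : AddSubgroup R) := by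
    rintro z ⟨k, j, hkj, rfl⟩
    have : N ≤ k ∨ P ≤ j := by omega
    rcases this with hk | hj
    · have hz : X ^ k = 0 := by
        rw [← Nat.sub_add_cancel hk, pow_add, hX, mul_zero]
      simp [hz]
    · have hz : Y ^ j = 0 := by
        rw [← Nat.sub_add_cancel hj, pow_add, hY, mul_zero]
      simp [hz]
  have := (AddSubgroup.closure_le _).2 hsub hmem
  simpa using this

private lemma ext_homog {K A B C : Type*} [Field K] [Ring A] [Algebra K A]
    [AddCommGroup B] [Module K B] [AddCommGroup C] [Module K C]
    (𝒜 : ℤ → Submodule K A) [GradedAlgebra 𝒜]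
    {f g : A ⊗[K] B →ₗ[K] C}
    (h : ∀ i : ℤ, ∀ a ∈ 𝒜 i, ∀ b : B, f (a ⊗ₜ[K] b) = g (a ⊗ₜ[K] b)) : f = g := by
  classical
  apply TensorProduct.ext'
  intro a b
  rw [← DirectSum.sum_support_decompose 𝒜 a, sum_tmul, map_sum, map_sum]
  exact Finset.sum_congr rfl fun i _ => h i _ (SetLike.coe_mem _) b


/-- The degree-`n` part of the graded tensor product `A ⊗ B` of two ℤ-graded algebras:
the span of the pure tensors `a ⊗ b` with `a` homogeneous of degree `i`, `b` homogeneous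
of degree `j` and `i + j = n`. -/
def tensorGrade {K A B : Type*} [Field K] [Ring A] [Ring B] [Algebra K A] [Algebra K B]
    (𝒜 : ℤ → Submodule K A) (ℬ : ℤ → Submodule K B) (n : ℤ) :
    Submodule K (A ⊗[K] B) :=
  Submodule.span K
    {x | ∃ i j : ℤ, i + j = n ∧ ∃ a ∈ 𝒜 i, ∃ b ∈ ℬ j, x = a ⊗ₜ[K] b}

/-- Let `A` be an `N`-dga and `B` a `P`-dga (ℤ-graded, with degree-one
derivations `dA`, `dB`, `dA^N = 0`, `dB^P = 0`).  On the graded tensor product `A ⊗ B`,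
with Koszul multiplication `(a⊗b)(a′⊗b′) = (−1)^{|b||a′|} aa′ ⊗ bb′`, the map
`D(a⊗b) = dA(a)⊗b + (−1)^{|a|} a⊗dB(b)` is a degree-one derivation and `D^{N+P−1} = 0`;
that is, `A ⊗ B` is an `(N+P−1)`-differential graded algebra. -/
theorem graded_tensor_product_N_dga
    {K A B : Type*} [Field K] [Ring A] [Ring B] [Algebra K A] [Algebra K B]
    (𝒜 : ℤ → Submodule K A) (ℬ : ℤ → Submodule K B)
    [GradedAlgebra 𝒜] [GradedAlgebra ℬ]
    (dA : Module.End K A) (dB : Module.End K B)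
    (hdA_deg : ∀ (i : ℤ), ∀ a ∈ 𝒜 i, dA a ∈ 𝒜 (i + 1))
    (hdB_deg : ∀ (j : ℤ), ∀ b ∈ ℬ j, dB b ∈ ℬ (j + 1))
    (hdA_leib : ∀ (i : ℤ), ∀ a ∈ 𝒜 i, ∀ a' : A,
      dA (a * a') = dA a * a' + ((i.negOnePow : ℤ)) • (a * dA a'))
    (hdB_leib : ∀ (j : ℤ), ∀ b ∈ ℬ j, ∀ b' : B,
      dB (b * b') = dB b * b' + ((j.negOnePow : ℤ)) • (b * dB b'))
    (N P : ℕ) (hN : 1 ≤ N) (hP : 1 ≤ P)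
    (hdAN : dA ^ N = 0) (hdBP : dB ^ P = 0)
    -- the Koszul-sign multiplication on `A ⊗ B`
    (mul : (A ⊗[K] B) →ₗ[K] (A ⊗[K] B) →ₗ[K] (A ⊗[K] B))
    (hmul : ∀ (j i' : ℤ), ∀ (a : A), ∀ a' ∈ 𝒜 i', ∀ b ∈ ℬ j, ∀ b' : B,
      mul (a ⊗ₜ[K] b) (a' ⊗ₜ[K] b')
        = (((j * i').negOnePow : ℤ)) • ((a * a') ⊗ₜ[K] (b * b')))
    -- the map `D(a⊗b) = dA(a)⊗b + (−1)^{|a|} a⊗dB(b)`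
    (D : Module.End K (A ⊗[K] B))
    (hD : ∀ (i : ℤ), ∀ a ∈ 𝒜 i, ∀ b : B,
      D (a ⊗ₜ[K] b) = dA a ⊗ₜ[K] b + ((i.negOnePow : ℤ)) • (a ⊗ₜ[K] dB b)) :
    (∀ (n : ℤ), ∀ x ∈ tensorGrade 𝒜 ℬ n, ∀ y : A ⊗[K] B,
        D (mul x y) = mul (D x) y + ((n.negOnePow : ℤ)) • mul x (D y))
    ∧ (∀ (n : ℤ), ∀ x ∈ tensorGrade 𝒜 ℬ n, D x ∈ tensorGrade 𝒜 ℬ (n + 1))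
    ∧ D ^ (N + P - 1) = 0 := by
  classical
  -- the sign involution on `A`
  set ε : A →ₗ[K] A :=
    (DirectSum.toModule K ℤ A fun i => ((i.negOnePow : ℤ) • (𝒜 i).subtype)) ∘ₗ
      (DirectSum.decomposeLinearEquiv 𝒜).toLinearMap with hεdef
  have hε : ∀ i : ℤ, ∀ a ∈ 𝒜 i, ε a = ((i.negOnePow : ℤ)) • a := by
    intro i a ha
    show (DirectSum.toModule K ℤ A fun i => ((i.negOnePow : ℤ) • (𝒜 i).subtype))
        ((DirectSum.decomposeLinearEquiv 𝒜) a) = _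
    rw [DirectSum.decomposeLinearEquiv_apply, DirectSum.decompose_of_mem 𝒜 ha,
      ← DirectSum.lof_eq_of K, DirectSum.toModule_lof]
    simp
  set X : Module.End K (A ⊗[K] B) := LinearMap.rTensor B dA with hXdef
  set Y : Module.End K (A ⊗[K] B) := TensorProduct.map ε dB with hYdef
  have hXab : ∀ (a : A) (b : B), X (a ⊗ₜ[K] b) = dA a ⊗ₜ[K] b := fun a b => rfl
  have hYab : ∀ (i : ℤ), ∀ a ∈ 𝒜 i, ∀ b : B,
      Y (a ⊗ₜ[K] b) = ((i.negOnePow : ℤ)) • (a ⊗ₜ[K] dB b) := by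
    intro i a ha b
    show ε a ⊗ₜ[K] dB b = _
    rw [hε i a ha, smul_tmul']
  have hDXY : D = X + Y := by
    apply ext_homog 𝒜
    intro i a ha b
    rw [hD i a ha b, LinearMap.add_apply, hXab, hYab i a ha b]
  have hYX : Y * X = -(X * Y) := by
    have : Y * X = (-(X * Y) : Module.End K (A ⊗[K] B)) := by
      apply ext_homog 𝒜
      intro i a ha b
      rw [Module.End.mul_apply, LinearMap.neg_apply, Module.End.mul_apply,
        hXab, hYab (i+1) _ (hdA_deg i a ha), hYab i a ha b, map_zsmul, hXab,
        Int.negOnePow_succ]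
      push_cast
      rw [neg_smul]
    exact this
  have hXN : X ^ N = 0 := by
    have hpow : ∀ n : ℕ, X ^ n = LinearMap.rTensor B (dA ^ n) := by
      intro n
      induction n with
      | zero =>
        rw [pow_zero, pow_zero]
        exact (TensorProduct.ext' fun a b => rfl)
      | succ n ih =>
        rw [pow_succ, pow_succ, ih, Module.End.mul_eq_comp, Module.End.mul_eq_comp,
          LinearMap.rTensor_comp, hXdef]
    rw [hpow N, hdAN, LinearMap.rTensor_zero]
  have hYP : Y ^ P = 0 := by
    have hpow : ∀ n : ℕ, Y ^ n = TensorProduct.map (ε ^ n) (dB ^ n) := by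
      intro n
      induction n with
      | zero =>
        rw [pow_zero, pow_zero, pow_zero]
        exact (TensorProduct.ext' fun a b => rfl)
      | succ n ih =>
        rw [pow_succ, pow_succ, pow_succ, ih, Module.End.mul_eq_comp,
          Module.End.mul_eq_comp, Module.End.mul_eq_comp, TensorProduct.map_comp, hYdef]
    rw [hpow P, hdBP]
    apply TensorProduct.ext'
    intro a b
    simp
  have hσ : ∀ m k : ℤ, ((m.negOnePow : ℤ)) * ((k.negOnePow : ℤ)) = (((m + k).negOnePow : ℤ)) := by
    intro m k
    rw [Int.negOnePow_add]
    push_cast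
    ring
  have hσeq : ∀ m k : ℤ, Even (m - k) → ((m.negOnePow : ℤ)) = ((k.negOnePow : ℤ)) := by
    intro m k h
    rw [(Int.negOnePow_eq_iff m k).2 h]
  refine ⟨?_, ?_, ?_⟩
  · -- Leibniz
    intro n x hx
    refine Submodule.span_induction
      (p := fun x _ => ∀ y : A ⊗[K] B,
        D (mul x y) = mul (D x) y + ((n.negOnePow : ℤ)) • mul x (D y)) ?_ ?_ ?_ ?_ hx
    · rintro z ⟨i, j, hij, a, ha, b, hb, rfl⟩
      intro y
      have hfun : (D ∘ₗ mul (a ⊗ₜ[K] b))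
          = (mul (D (a ⊗ₜ[K] b)) + ((n.negOnePow : ℤ)) • (mul (a ⊗ₜ[K] b) ∘ₗ D)) := by
        apply ext_homog 𝒜
        intro i' a' ha' b'
        have hab' : a * a' ∈ 𝒜 (i + i') := SetLike.mul_mem_graded ha ha'
        rw [LinearMap.comp_apply, LinearMap.add_apply, LinearMap.smul_apply,
          LinearMap.comp_apply]
        rw [hmul j i' a a' ha' b hb b', map_zsmul, hD (i+i') _ hab',
          hdA_leib i a ha a', hdB_leib j b hb b',
          hD i a ha b, hD i' a' ha' b']
        rw [map_add, LinearMap.add_apply, map_zsmul, LinearMap.smul_apply]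
        rw [map_add, map_zsmul]
        rw [hmul j i' (dA a) a' ha' b hb b',
          hmul (j+1) i' a a' ha' (dB b) (hdB_deg j b hb) b',
          hmul j (i'+1) a (dA a') (hdA_deg i' a' ha') b hb b',
          hmul j i' a a' ha' b hb (dB b')]
        simp only [add_tmul, tmul_add, tmul_smul, ← smul_tmul', smul_add, smul_smul, hσ]
        rw [hσeq (i + (j+1)*i') (j*i' + (i + i')) ⟨0, by ring⟩,
          hσeq (n + j*(i'+1)) (j*i' + i) ⟨j, by rw [← hij]; ring⟩,
          hσeq (n + (i' + j*i')) (j*i' + (i + i' + j)) ⟨0, by rw [← hij]; ring⟩]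
        abel
      have := LinearMap.congr_fun hfun y
      rw [LinearMap.comp_apply, LinearMap.add_apply, LinearMap.smul_apply,
        LinearMap.comp_apply] at this
      exact this
    · intro y
      simp
    · intro u v _ _ hu hv y
      simp only [map_add, LinearMap.add_apply, hu y, hv y, smul_add]
      abel
    · intro c u _ hu y
      simp only [map_smul, LinearMap.smul_apply, hu y, smul_add]
      congr 1
      rw [smul_comm]
  · -- degree
    intro n x hx
    refine Submodule.span_induction
      (p := fun x _ => D x ∈ tensorGrade 𝒜 ℬ (n + 1)) ?_ ?_ ?_ ?_ hx
    · rintro z ⟨i, j, hij, a, ha, b, hb, rfl⟩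
      rw [hD i a ha b]
      refine Submodule.add_mem _ ?_ (Submodule.smul_of_tower_mem _ _ ?_)
      · exact Submodule.subset_span ⟨i+1, j, by omega, dA a, hdA_deg i a ha, b, hb, rfl⟩
      · exact Submodule.subset_span ⟨i, j+1, by omega, a, ha, dB b, hdB_deg j b hb, rfl⟩
    · simp
    · intro u v _ _ hu hv
      rw [map_add]; exact Submodule.add_mem _ hu hv
    · intro c u _ hu
      rw [map_smul]; exact Submodule.smul_mem _ c hu
  · -- nilpotency
    rw [hDXY]
    exact anticomm_nilpotent hYX hN hP hXN hYP
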